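/- arXiv:1910.01454 — 2 statements merged into one kernel-verified Lean document; each statement's English description precedes it below -/
import Mathlib

section
/- Let C be a k-linear Hom-finite Krull-Schmidt additive category, let A be a class of isomorphism classes of indecomposable objects of C, and let F: A → A be a map such that for each indecomposable X in A there is a k-linear map η_X: Hom(X,FX) → k for which the bilinear pairing Hom(X,Y) × Hom(Y,FX) → k, (f,g) ↦ η_X(gf), is non-degenerate for every indecomposable Y in A. Then the assignments η_{X,Y}(f)(g) := η_X(gf) define isomorphisms Hom(X,Y) ≅ Hom(Y,FX)^* natural in X and Y, so F extends to a right Serre functor on the additive subcategory generated by A. -/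
open CategoryTheory

lemma perfectPairing_bijective {k V W : Type*} [Field k]
    [AddCommGroup V] [Module k V] [AddCommGroup W] [Module k W]
    [Module.Finite k V] [Module.Finite k W]
    (B : V →ₗ[k] W →ₗ[k] k)
    (h1 : ∀ v : V, v ≠ 0 → ∃ w, B v w ≠ 0)
    (h2 : ∀ w : W, w ≠ 0 → ∃ v, B v w ≠ 0) :
    Function.Bijective B ∧ Function.Bijective B.flip := by
  have hBinj : Function.Injective B := by
    rw [← LinearMap.ker_eq_bot, LinearMap.ker_eq_bot']
    intro v hv
    by_contra h
    obtain ⟨w, hw⟩ := h1 v h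
    exact hw (by rw [hv]; rfl)
  have hFinj : Function.Injective B.flip := by
    rw [← LinearMap.ker_eq_bot, LinearMap.ker_eq_bot']
    intro w hw
    by_contra h
    obtain ⟨v, hv⟩ := h2 w h
    exact hv (by have := congrArg (fun f => f v) hw; simpa using this)
  have : FiniteDimensional k V := ‹Module.Finite k V›
  have : FiniteDimensional k W := ‹Module.Finite k W›
  have d1 : Module.finrank k V ≤ Module.finrank k W := by
    have := LinearMap.finrank_le_finrank_of_injective hBinj
    rwa [Subspace.dual_finrank_eq] at this
  have d2 : Module.finrank k W ≤ Module.finrank k V := by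
    have := LinearMap.finrank_le_finrank_of_injective hFinj
    rwa [Subspace.dual_finrank_eq] at this
  have e1 : Module.finrank k V = Module.finrank k (Module.Dual k W) := by
    rw [Subspace.dual_finrank_eq]; omega
  have e2 : Module.finrank k W = Module.finrank k (Module.Dual k V) := by
    rw [Subspace.dual_finrank_eq]; omega
  exact ⟨⟨hBinj, (LinearMap.injective_iff_surjective_of_finrank_eq_finrank e1).mp hBinj⟩,
    ⟨hFinj, (LinearMap.injective_iff_surjective_of_finrank_eq_finrank e2).mp hFinj⟩⟩
open CategoryTheory

universe u v

/-- A Krull-Schmidt category: every object is a finite biproduct of objects with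
local endomorphism rings. -/
def KrullSchmidt (C : Type u) [Category.{v} C] [Preadditive C]
    [Limits.HasFiniteBiproducts C] : Prop :=
  ∀ X : C, ∃ (n : ℕ) (f : Fin n → C),
    (∀ i, IsLocalRing (End (f i))) ∧ Nonempty (X ≅ Limits.biproduct f)

/-- Given a class `P` of (isomorphism classes of) indecomposable objects, a map `FF` on
objects of `P` and linear forms `η_X : Hom(X, FF X) → k` whose induced pairings
`Hom(X,Y) × Hom(Y, FF X) → k`, `(f,g) ↦ η_X(g ∘ f)` are non-degenerate, the assignments
`η_{X,Y}(f)(g) := η_X(g ∘ f)` are bijections `Hom(X,Y) ≅ Hom(Y, FF X)^*` natural in `X`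
and `Y`; in particular `FF` extends to morphisms, i.e. it is a right Serre functor on the
subcategory generated by `P`. -/
theorem rightSerre_of_nondegenerate_pairing (k : Type*) [Field k] (C : Type u)
    [Category.{v} C] [Preadditive C] [CategoryTheory.Linear k C]
    [∀ X Y : C, Module.Finite k (X ⟶ Y)] [Limits.HasFiniteBiproducts C]
    (hKS : KrullSchmidt C)
    (P : C → Prop) (hP : ∀ X, P X → IsLocalRing (End X))
    (FF : C → C) (hFP : ∀ X, P X → P (FF X))
    (η : ∀ X : C, (X ⟶ FF X) →ₗ[k] k)
    (hnd : ∀ X Y : C, P X → P Y →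
      (∀ f : X ⟶ Y, f ≠ 0 → ∃ g : Y ⟶ FF X, η X (f ≫ g) ≠ 0) ∧
      (∀ g : Y ⟶ FF X, g ≠ 0 → ∃ f : X ⟶ Y, η X (f ≫ g) ≠ 0)) :
    ∃ Fmap : ∀ (X X' : C), (X ⟶ X') → (FF X ⟶ FF X'),
      (∀ X : C, P X → Fmap X X (𝟙 X) = 𝟙 (FF X)) ∧
      (∀ (X Y Z : C), P X → P Y → P Z → ∀ (a : X ⟶ Y) (b : Y ⟶ Z),
        Fmap X Z (a ≫ b) = Fmap X Y a ≫ Fmap Y Z b) ∧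
      (∀ X Y : C, P X → P Y →
        Function.Bijective
          (fun f : X ⟶ Y => (η X).comp (CategoryTheory.Linear.leftComp k (FF X) f))) ∧
      (∀ (X Y Y' : C), P X → P Y → P Y' → ∀ (b : Y ⟶ Y') (u : X ⟶ Y) (g : Y' ⟶ FF X),
        η X ((u ≫ b) ≫ g) = η X (u ≫ b ≫ g)) ∧
      (∀ (X X' Y : C), P X → P X' → P Y → ∀ (a : X ⟶ X') (u : X' ⟶ Y) (g : Y ⟶ FF X),
        η X ((a ≫ u) ≫ g) = η X' (u ≫ g ≫ Fmap X X' a)) := by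

  classical
  -- the bilinear pairing
  have Bdef : ∀ (X Y : C), ∃ B : (X ⟶ Y) →ₗ[k] (Y ⟶ FF X) →ₗ[k] k,
      ∀ f g, B f g = η X (f ≫ g) := fun X Y =>
    ⟨LinearMap.mk₂ k (fun f g => η X (f ≫ g))
      (fun f f' g => by rw [Preadditive.add_comp, map_add])
      (fun c f g => by rw [Linear.smul_comp, map_smul])
      (fun f g g' => by rw [Preadditive.comp_add, map_add])
      (fun c f g => by rw [Linear.comp_smul, map_smul]), fun f g => rfl⟩
  choose B hB using Bdef
  have hbij : ∀ X Y : C, P X → P Y →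
      Function.Bijective (B X Y) ∧ Function.Bijective (B X Y).flip := by
    intro X Y hX hY
    refine perfectPairing_bijective (B X Y) ?_ ?_
    · intro f hf
      obtain ⟨g, hg⟩ := (hnd X Y hX hY).1 f hf
      exact ⟨g, by rwa [hB]⟩
    · intro g hg
      obtain ⟨f, hf⟩ := (hnd X Y hX hY).2 g hg
      exact ⟨f, by rwa [hB]⟩
  -- the defining property of Fmap
  set key : ∀ (X X' : C), (X ⟶ X') → (FF X ⟶ FF X') → Prop :=
    fun X X' a h => ∀ g : X' ⟶ FF X, η X' (g ≫ h) = η X (a ≫ g) with hkeydef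
  have hex : ∀ (X X' : C), P X → P X' → ∀ a : X ⟶ X', ∃ h, key X X' a h := by
    intro X X' hX hX' a
    obtain ⟨h, hh⟩ := (hbij X' (FF X) hX' (hFP X hX)).2.2 (B X X' a)
    refine ⟨h, fun g => ?_⟩
    have := congrArg (fun φ : (X' ⟶ FF X) →ₗ[k] k => φ g) hh
    simpa [hB] using this
  have huniq : ∀ (X X' : C), P X → P X' → ∀ (a : X ⟶ X') (h₁ h₂ : FF X ⟶ FF X'),
      key X X' a h₁ → key X X' a h₂ → h₁ = h₂ := by
    intro X X' hX hX' a h₁ h₂ k₁ k₂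
    by_contra hne
    have hsub : h₁ - h₂ ≠ 0 := sub_ne_zero_of_ne hne
    obtain ⟨g, hg⟩ := (hnd X' (FF X) hX' (hFP X hX)).2 (h₁ - h₂) hsub
    apply hg
    rw [Preadditive.comp_sub, map_sub, k₁ g, k₂ g, sub_self]
  refine ⟨fun X X' a => if hc : ∃ h, key X X' a h then hc.choose else 0, ?_, ?_, ?_, ?_, ?_⟩
  · -- identity
    intro X hX
    have hid : key X X (𝟙 X) (𝟙 (FF X)) := fun g => by simp
    show (if hc : ∃ h, key X X (𝟙 X) h then hc.choose else 0) = 𝟙 (FF X)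
    rw [dif_pos (⟨_, hid⟩ : ∃ h, key X X (𝟙 X) h)]
    exact huniq X X hX hX _ _ _ (⟨_, hid⟩ : ∃ h, key X X (𝟙 X) h).choose_spec hid
  · -- composition
    intro X Y Z hX hY hZ a b
    have ha := (hex X Y hX hY a).choose_spec
    have hb := (hex Y Z hY hZ b).choose_spec
    show (if hc : ∃ h, key X Z (a ≫ b) h then hc.choose else 0) =
      (if hc : ∃ h, key X Y a h then hc.choose else 0) ≫
      (if hc : ∃ h, key Y Z b h then hc.choose else 0)
    rw [dif_pos (hex X Y hX hY a), dif_pos (hex Y Z hY hZ b),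
      dif_pos (hex X Z hX hZ (a ≫ b))]
    refine huniq X Z hX hZ _ _ _ (hex X Z hX hZ (a ≫ b)).choose_spec (fun g => ?_)
    rw [← Category.assoc, hb (g ≫ (hex X Y hX hY a).choose), ← Category.assoc,
      ha (b ≫ g), ← Category.assoc]
  · -- bijectivity
    intro X Y hX hY
    have : (fun f : X ⟶ Y => (η X).comp (CategoryTheory.Linear.leftComp k (FF X) f))
        = ⇑(B X Y) := by
      funext f
      exact LinearMap.ext fun g => by simp [hB]
    rw [this]
    exact (hbij X Y hX hY).1
  · intro X Y Y' _ _ _ b u g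
    rw [Category.assoc]
  · -- naturality
    intro X X' Y hX hX' hY a u g
    show (η X) ((a ≫ u) ≫ g) =
      (η X') (u ≫ g ≫ (if hc : ∃ h, key X X' a h then hc.choose else 0))
    rw [dif_pos (hex X X' hX hX' a)]
    have := (hex X X' hX hX' a).choose_spec (u ≫ g)
    rw [Category.assoc] at this
    rw [this, ← Category.assoc]
end

section
/- Let C be an (d+2)-angulated category with a right Serre functor F, and let A_0 →^{α_0} A_1 → ⋯ → A_{d+1} →^{α_{d+1}} Σ^d A_0 be an (d+2)-angle. Suppose in a morphism of (d+2)-angles from the left rotation of this (d+2)-angle to an (d+2)-angle FA_0 →^{Fα_0} FA_1 →^{β_1} B_2 → ⋯ → B_{d+1} →^{β_{d+1}} Σ^d FA_0, there exist φ: A_0 → Σ^{-d}B_{d+1} and ϕ: A_{d+1} → B_d with Σ^d φ ∘ α_{d+1} = β_d ∘ ϕ, and intermediate morphisms δ_i: A_i → B_{i} as provided by axiom (N3). Then η_{A_d}(ω_d ∘ ϕ ∘ α_d) = (-1)^d η_{A_0}(Σ^{-d}β_{d+1} ∘ φ), where ω_i: B_i → FA_i are the connecting morphisms satisfying Fα_{i-1}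 ∘ ω_{i-1} = ω_i ∘ β_{i-1}. -/
open CategoryTheory

universe u v

/-- An `(d+2)-Σᵈ`-sequence: objects `A_0, …, A_{d+1}` with morphisms
`A_0 → A_1 → ⋯ → A_{d+1}` and `A_{d+1} → Σᵈ A_0`. -/
structure Angle (C : Type u) [Category.{v} C] (d : ℕ) (S : C ⥤ C) where
  obj : Fin (d + 2) → C
  mor : ∀ i : Fin (d + 1), obj i.castSucc ⟶ obj i.succ
  last : obj (Fin.last (d + 1)) ⟶ S.obj (obj ⟨0, by omega⟩)

/-- The data of an `(d+2)`-angulated structure on `C` with suspension `S`: a class of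
distinguished `(d+2)`-angles such that every morphism extends to a distinguished
`(d+2)`-angle (axiom (N1)(c)) and every commutative square on the first morphisms of two
distinguished `(d+2)`-angles extends to a morphism of `(d+2)`-angles (axiom (N3)). -/
structure AngStruct (C : Type u) [Category.{v} C] (d : ℕ) (S : C ⥤ C) where
  dist : Set (Angle C d S)
  extend : ∀ {A B : C} (f : A ⟶ B), ∃ T ∈ dist,
      ∃ (e0 : T.obj ⟨0, by omega⟩ ≅ A) (e1 : T.obj ⟨1, by omega⟩ ≅ B),
        T.mor ⟨0, by omega⟩ ≫ e1.hom = e0.hom ≫ f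
  complete : ∀ T ∈ dist, ∀ U ∈ dist,
      ∀ (φ0 : T.obj ⟨0, by omega⟩ ⟶ U.obj ⟨0, by omega⟩)
        (φ1 : T.obj ⟨1, by omega⟩ ⟶ U.obj ⟨1, by omega⟩),
      T.mor ⟨0, by omega⟩ ≫ φ1 = φ0 ≫ U.mor ⟨0, by omega⟩ →
      ∃ φ : ∀ i : Fin (d + 2), T.obj i ⟶ U.obj i,
        φ ⟨0, by omega⟩ = φ0 ∧ φ ⟨1, by omega⟩ = φ1 ∧
        (∀ i : Fin (d + 1), T.mor i ≫ φ i.succ = φ i.castSucc ≫ U.mor i) ∧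
        T.last ≫ S.map (φ ⟨0, by omega⟩) = φ (Fin.last (d + 1)) ≫ U.last

/-- `f` lies in the Jacobson radical of the category. -/
def InRad {C : Type u} [Category.{v} C] [Preadditive C] {A B : C} (f : A ⟶ B) : Prop :=
  ∀ g : B ⟶ A, IsIso (𝟙 A - f ≫ g)

/-- `f : A → B` is left almost split. -/
def LeftAlmostSplit {C : Type u} [Category.{v} C] {A B : C} (f : A ⟶ B) : Prop :=
  ¬ IsSplitMono f ∧ ∀ ⦃Z : C⦄ (g : A ⟶ Z), ¬ IsSplitMono g → ∃ h : B ⟶ Z, f ≫ h = g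

/-- `f : A → B` is right almost split. -/
def RightAlmostSplit {C : Type u} [Category.{v} C] {A B : C} (f : A ⟶ B) : Prop :=
  ¬ IsSplitEpi f ∧ ∀ ⦃Z : C⦄ (g : Z ⟶ B), ¬ IsSplitEpi g → ∃ h : Z ⟶ A, h ≫ f = g

/-- An Auslander-Reiten `(d+2)`-angle: `α_0` is left almost split, `α_d` is right almost
split and the middle morphisms `α_1, …, α_{d-1}` lie in the radical. -/
def IsARAngle {C : Type u} [Category.{v} C] [Preadditive C] {d : ℕ} {S : C ⥤ C}
    (T : Angle C d S) : Prop :=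
  LeftAlmostSplit (T.mor ⟨0, by omega⟩) ∧ RightAlmostSplit (T.mor (Fin.last d)) ∧
  ∀ i : Fin (d + 1), 0 < (i : ℕ) → (i : ℕ) < d → InRad (T.mor i)

/-- A right Serre functor: natural isomorphisms `Hom(A,B) ≅ Hom(B,FA)^*`. -/
structure RightSerre (k : Type*) [Field k] (C : Type u) [Category.{v} C]
    [Preadditive C] [CategoryTheory.Linear k C] (F : C ⥤ C) where
  η : ∀ A B : C, (A ⟶ B) →ₗ[k] Module.Dual k (B ⟶ F.obj A)
  bij : ∀ A B : C, Function.Bijective (η A B)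
  natB : ∀ {A B B' : C} (b : B ⟶ B') (u : A ⟶ B) (g : B' ⟶ F.obj A),
      η A B' (u ≫ b) g = η A B u (b ≫ g)
  natA : ∀ {A A' B : C} (a : A ⟶ A') (u : A' ⟶ B) (g : B ⟶ F.obj A),
      η A B (a ≫ u) g = η A' B u (g ≫ F.map a)

/-- Step 3 in the proof that a Serre functor is `(d+2)`-angulated: given an `(d+2)`-angle
`A_•`, an `(d+2)`-angle `B_•` starting with `FA_0 → FA_1` (identified via `ω_0, ω_1`),
connecting morphisms `ω_i : B_i → FA_i`, a morphism `(δ_i, ϕ, Σᵈφ)` from the left rotation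
of `A_•` to `B_•` (with `ϕ = δ_d : A_{d+1} → B_d` and `Σᵈφ ∘ α_{d+1} = β_d ∘ ϕ`), one has
`η_{A_d}(ω_d ∘ ϕ ∘ α_d) = (-1)^d η_{A_0}(Σ^{-d}β_{d+1} ∘ φ)`. -/
theorem serre_step3 (k : Type*) [Field k] (C : Type u)
    [Category.{v} C] [Preadditive C] [CategoryTheory.Linear k C]
    [∀ X Y : C, Module.Finite k (X ⟶ Y)] [Limits.HasFiniteBiproducts C]
    (hKS : KrullSchmidt C) (d : ℕ) (E : C ≌ C) (Ang : AngStruct C d E.functor)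
    (FF : C ⥤ C) (RS : RightSerre k C FF)
    (T : Angle C d E.functor) (hT : T ∈ Ang.dist)
    (U : Angle C d E.functor) (hU : U ∈ Ang.dist)
    (ω : ∀ i : Fin (d + 2), U.obj i ⟶ FF.obj (T.obj i))
    (hω : ∀ i : Fin (d + 1), U.mor i ≫ ω i.succ = ω i.castSucc ≫ FF.map (T.mor i))
    (hω0 : IsIso (ω ⟨0, by omega⟩)) (hω1 : IsIso (ω ⟨1, by omega⟩))
    (δ : ∀ i : Fin (d + 1), T.obj i.succ ⟶ U.obj i.castSucc)
    (hδ : ∀ i : Fin d, T.mor i.succ ≫ δ i.succ = δ i.castSucc ≫ U.mor i.castSucc)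
    (φ' : E.functor.obj (T.obj ⟨0, by omega⟩) ⟶ U.obj (Fin.last (d + 1)))
    (hsq : T.last ≫ φ' = δ (Fin.last d) ≫ U.mor (Fin.last d))
    (hrot : φ' ≫ U.last =
      ((-1 : ℤ) ^ d) • E.functor.map (T.mor ⟨0, by omega⟩ ≫ δ ⟨0, by omega⟩)) :
    RS.η (T.obj ((Fin.last d).castSucc)) (T.obj ((Fin.last d).castSucc))
        (𝟙 (T.obj ((Fin.last d).castSucc)))
        (T.mor (Fin.last d) ≫ δ (Fin.last d) ≫ ω ((Fin.last d).castSucc)) =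
      (-1 : k) ^ d *
        RS.η (T.obj ⟨0, by omega⟩) (T.obj ⟨0, by omega⟩) (𝟙 (T.obj ⟨0, by omega⟩))
          (E.unitIso.hom.app (T.obj ⟨0, by omega⟩) ≫ E.inverse.map (φ' ≫ U.last) ≫
            E.unitIso.inv.app (U.obj ⟨0, by omega⟩) ≫ ω ⟨0, by omega⟩) := by
  -- `E.inverse` is additive
  have hBB : Limits.HasBinaryBiproducts C := Limits.hasBinaryBiproducts_of_finite_biproducts C
  have hPBB := Limits.preservesBinaryBiproducts_of_preservesBinaryProducts E.inverse
  have hAdd : E.inverse.Additive := Functor.additive_of_preservesBinaryBiproducts E.inverse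
  -- the step along the angle
  have key : ∀ i : Fin d,
      RS.η (T.obj i.castSucc.castSucc) (T.obj i.castSucc.castSucc) (𝟙 _)
        (T.mor i.castSucc ≫ δ i.castSucc ≫ ω i.castSucc.castSucc) =
      RS.η (T.obj i.succ.castSucc) (T.obj i.succ.castSucc) (𝟙 _)
        (T.mor i.succ ≫ δ i.succ ≫ ω i.succ.castSucc) := by
    intro i
    have h1 := RS.natB (T.mor i.castSucc) (𝟙 (T.obj i.castSucc.castSucc))
      (δ i.castSucc ≫ ω i.castSucc.castSucc)
    rw [Category.id_comp] at h1
    have h2 := RS.natA (T.mor i.castSucc) (𝟙 (T.obj i.castSucc.succ))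
      (δ i.castSucc ≫ ω i.castSucc.castSucc)
    rw [Category.comp_id] at h2
    have h3 : (δ i.castSucc ≫ ω i.castSucc.castSucc) ≫ FF.map (T.mor i.castSucc) =
        T.mor i.succ ≫ δ i.succ ≫ ω i.succ.castSucc := by
      rw [Category.assoc, ← hω i.castSucc, ← Category.assoc, ← hδ i, Category.assoc]
      rfl
    rw [h3] at h2
    rw [← h1, h2]
    rfl
  -- iterate the step
  have chain : ∀ n : ℕ, ∀ hn : n < d + 1,
      RS.η (T.obj ⟨0, by omega⟩) (T.obj ⟨0, by omega⟩) (𝟙 _)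
        (T.mor ⟨0, by omega⟩ ≫ δ ⟨0, by omega⟩ ≫ ω ⟨0, by omega⟩) =
      RS.η (T.obj (⟨n, hn⟩ : Fin (d + 1)).castSucc)
          (T.obj (⟨n, hn⟩ : Fin (d + 1)).castSucc) (𝟙 _)
        (T.mor ⟨n, hn⟩ ≫ δ ⟨n, hn⟩ ≫ ω (⟨n, hn⟩ : Fin (d + 1)).castSucc) := by
    intro n
    induction n with
    | zero => intro hn; rfl
    | succ m ih =>
      intro hn
      have hm : m < d + 1 := by omega
      have hmd : m < d := by omega
      have := key ⟨m, hmd⟩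
      have e1 : (⟨m, hmd⟩ : Fin d).castSucc = (⟨m, hm⟩ : Fin (d + 1)) := rfl
      have e2 : (⟨m, hmd⟩ : Fin d).succ = (⟨m + 1, hn⟩ : Fin (d + 1)) := rfl
      rw [e1, e2] at this
      rw [ih hm, this]
  have hlast : (Fin.last d) = (⟨d, by omega⟩ : Fin (d + 1)) := rfl
  have main := (chain d (by omega)).symm
  rw [hlast, main]
  -- now handle the right-hand side
  rw [hrot, Functor.map_zsmul, Preadditive.zsmul_comp, Preadditive.comp_zsmul, map_zsmul]
  have hunit : E.unitIso.hom.app (T.obj ⟨0, by omega⟩) ≫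
      E.inverse.map (E.functor.map (T.mor ⟨0, by omega⟩ ≫ δ ⟨0, by omega⟩)) ≫
      E.unitIso.inv.app (U.obj ⟨0, by omega⟩) ≫ ω ⟨0, by omega⟩ =
      T.mor ⟨0, by omega⟩ ≫ δ ⟨0, by omega⟩ ≫ ω ⟨0, by omega⟩ := by
    have hn : (T.mor ⟨0, by omega⟩ ≫ δ ⟨0, by omega⟩) ≫
        E.unitIso.hom.app (U.obj ⟨0, by omega⟩) =
        E.unitIso.hom.app (T.obj ⟨0, by omega⟩) ≫
        E.inverse.map (E.functor.map (T.mor ⟨0, by omega⟩ ≫ δ ⟨0, by omega⟩)) := by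
      have h := E.unitIso.hom.naturality (T.mor ⟨0, by omega⟩ ≫ δ ⟨0, by omega⟩)
      simp only [Functor.id_map, Functor.comp_map] at h
      exact h
    rw [← Category.assoc, ← hn, Category.assoc, Iso.hom_inv_id_app_assoc]
    simp
    exact Category.assoc _ _ _
  rw [hunit]
  rw [zsmul_eq_mul, Int.cast_pow, Int.cast_neg, Int.cast_one, ← mul_assoc,
    ← mul_pow]
  norm_num
end
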